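/- Let C be a nonempty bounded closed convex subset of a real Banach space X. Then the set of functionals x* ∈ X* such that |x*| attains its minimum on C (i.e., there exists c₀ ∈ C with |x*(c₀)| = inf_{c ∈ C} |x*(c)|) is norm-dense in X*. -/

import Mathlib

open Set Filter Topology

lemma weak_ekeland {α : Type*} [MetricSpace α] [CompleteSpace α] [Nonempty α]
    (F : α → ℝ) (hF : Continuous F) (hbdd : BddBelow (Set.range F)) {ε : ℝ} (hε : 0 < ε) :
    ∃ x₀ : α, ∀ x : α, F x₀ ≤ F x + ε * dist x x₀ := by
  obtain ⟨B, hB⟩ := hbdd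
  simp only [mem_lowerBounds, Set.forall_mem_range] at hB
  have key : ∀ (n : ℕ) (x : α), ∃ y, (F y + ε * dist y x ≤ F x) ∧
      ∀ z, F z + ε * dist z x ≤ F x → F y ≤ F z + (1/2 : ℝ) ^ n := by
    intro n x
    set S : Set α := {z | F z + ε * dist z x ≤ F x} with hS
    have hxS : x ∈ S := by simp [hS]
    have hne : (F '' S).Nonempty := ⟨F x, x, hxS, rfl⟩
    have hbb : BddBelow (F '' S) := ⟨B, by rintro _ ⟨z, _, rfl⟩; exact hB z⟩
    have hlt : sInf (F '' S) < sInf (F '' S) + (1/2 : ℝ) ^ n := by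
      have : (0:ℝ) < (1/2:ℝ)^n := by positivity
      linarith
    obtain ⟨_, ⟨y, hyS, rfl⟩, hy⟩ := exists_lt_of_csInf_lt hne hlt
    refine ⟨y, hyS, fun z hz => ?_⟩
    have := csInf_le hbb (Set.mem_image_of_mem F hz)
    linarith
  choose step h1 h2 using key
  obtain ⟨x0⟩ := ‹Nonempty α›
  set u : ℕ → α := fun n => Nat.rec x0 step n with hu
  have huS : ∀ n, u (n + 1) = step n (u n) := fun n => rfl
  have hA : ∀ n, F (u (n+1)) + ε * dist (u (n+1)) (u n) ≤ F (u n) := by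
    intro n; rw [huS]; exact h1 n (u n)
  have hanti : ∀ n m, n ≤ m → ε * dist (u m) (u n) ≤ F (u n) - F (u m) := by
    intro n m hnm
    obtain ⟨k, rfl⟩ := Nat.exists_eq_add_of_le hnm
    induction k with
    | zero => simp
    | succ k ih =>
      have h3 := hA (n + k)
      have htri : dist (u (n+(k+1))) (u n) ≤ dist (u (n+k+1)) (u (n+k)) + dist (u (n+k)) (u n) :=
        by rw [show n+(k+1) = n+k+1 by ring]; exact dist_triangle _ _ _
      have hmul := mul_le_mul_of_nonneg_left htri hε.le
      rw [mul_add] at hmul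
      have h4 : F (u (n+(k+1))) = F (u (n+k+1)) := by ring_nf
      have ih' := ih (Nat.le_add_right _ _)
      linarith
  have hmono : Antitone (F ∘ u) := by
    apply antitone_nat_of_succ_le
    intro n
    have := hA n
    have := dist_nonneg (x := u (n+1)) (y := u n)
    simp only [Function.comp_apply]
    nlinarith
  have hbb2 : BddBelow (Set.range (F ∘ u)) :=
    ⟨B, by rintro _ ⟨n, rfl⟩; exact hB (u n)⟩
  have hconv : Tendsto (F ∘ u) atTop (𝓝 (⨅ n, F (u n))) := tendsto_atTop_ciInf hmono hbb2
  set L := ⨅ n, F (u n) with hL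
  have hLle : ∀ n, L ≤ F (u n) := fun n => ciInf_le hbb2 n
  have hcauchy : CauchySeq u := by
    apply cauchySeq_of_le_tendsto_0 (fun N => (F (u N) - L) / ε)
    · intro n m N hn hm
      rcases le_total n m with h | h
      · have := hanti n m h
        have h5 := hmono hn
        have h6 := hLle m
        rw [dist_comm]
        rw [le_div_iff₀ hε, mul_comm]
        simp only [Function.comp_apply] at h5
        linarith
      · have := hanti m n h
        have h5 := hmono hm
        have h6 := hLle n
        rw [le_div_iff₀ hε, mul_comm]
        simp only [Function.comp_apply] at h5
        linarith
    · have : Tendsto (fun N => (F (u N) - L) / ε) atTop (𝓝 ((L - L) / ε)) :=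
        ((hconv.sub tendsto_const_nhds).div_const ε)
      simpa using this
  obtain ⟨xs, hxs⟩ := cauchySeq_tendsto_of_complete hcauchy
  have hstar : ∀ n, F xs + ε * dist xs (u n) ≤ F (u n) := by
    intro n
    have hlim1 : Tendsto (fun m => F (u m) + ε * dist (u m) (u n)) atTop
        (𝓝 (F xs + ε * dist xs (u n))) :=
      ((hF.tendsto xs).comp hxs).add ((hxs.dist tendsto_const_nhds).const_mul ε)
    apply le_of_tendsto hlim1
    filter_upwards [eventually_ge_atTop n] with m hm
    have := hanti n m hm
    linarith
  refine ⟨xs, fun x => ?_⟩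
  by_contra hcon
  push_neg at hcon
  have hxS : ∀ n, F x + ε * dist x (u n) ≤ F (u n) := by
    intro n
    have htri : dist x (u n) ≤ dist x xs + dist xs (u n) := dist_triangle _ _ _
    have := mul_le_mul_of_nonneg_left htri hε.le
    have := hstar n
    nlinarith
  have hkey : ∀ n : ℕ, F xs ≤ F x + (1/2 : ℝ) ^ n := by
    intro n
    have h7 : F (u (n+1)) ≤ F x + (1/2:ℝ)^n := by
      rw [huS]; exact h2 n (u n) x (hxS n)
    have h8 := hstar (n+1)
    have := dist_nonneg (x := xs) (y := u (n+1))
    nlinarith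
  have hfin : F xs ≤ F x := by
    have hlim : Tendsto (fun n : ℕ => F x + (1/2:ℝ)^n) atTop (𝓝 (F x + 0)) :=
      tendsto_const_nhds.add (tendsto_pow_atTop_nhds_zero_of_lt_one (by norm_num) (by norm_num))
    have := ge_of_tendsto' hlim hkey
    linarith
  have := dist_nonneg (x := x) (y := xs)
  nlinarith


lemma cone_perturb {X : Type*} [NormedAddCommGroup X] [NormedSpace ℝ X]
    (C : Set X) (hconv : Convex ℝ C) (f : X →L[ℝ] ℝ) {x₀ : X} (hx₀ : x₀ ∈ C) {ε : ℝ}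
    (hε : 0 < ε) (h : ∀ x ∈ C, f x ≤ f x₀ + ε * ‖x - x₀‖) :
    ∃ G : X →L[ℝ] ℝ, ‖G‖ ≤ ε ∧ ∀ x ∈ C, f x - G x ≤ f x₀ - G x₀ := by
  set E : Set X := {y | ∃ t : ℝ, 0 ≤ t ∧ ∃ x ∈ C, y = t • (x - x₀)} with hE
  have hE0 : (0 : X) ∈ E := ⟨0, le_refl 0, x₀, hx₀, by simp⟩
  have hEf : ∀ y ∈ E, f y ≤ ε * ‖y‖ := by
    rintro y ⟨t, ht, x, hx, rfl⟩
    have h1 : f (x - x₀) ≤ ε * ‖x - x₀‖ := by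
      have := h x hx
      rw [map_sub]; linarith
    calc f (t • (x - x₀)) = t * f (x - x₀) := by simp
      _ ≤ t * (ε * ‖x - x₀‖) := mul_le_mul_of_nonneg_left h1 ht
      _ = ε * ‖t • (x - x₀)‖ := by rw [norm_smul, Real.norm_eq_abs, abs_of_nonneg ht]; ring
  have hEadd : ∀ y₁ ∈ E, ∀ y₂ ∈ E, y₁ + y₂ ∈ E := by
    rintro _ ⟨t₁, ht₁, x₁, hx₁, rfl⟩ _ ⟨t₂, ht₂, x₂, hx₂, rfl⟩
    rcases eq_or_lt_of_le (add_nonneg ht₁ ht₂) with hs | hs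
    · have h1 : t₁ = 0 := by linarith
      have h2 : t₂ = 0 := by linarith
      rw [h1, h2]; simpa using hE0
    · set s := t₁ + t₂ with hsdef
      refine ⟨s, hs.le, (t₁ / s) • x₁ + (t₂ / s) • x₂,
        hconv hx₁ hx₂ (by positivity) (by positivity) (by field_simp; exact hsdef.symm), ?_⟩
      have hns : s ≠ 0 := ne_of_gt hs
      match_scalars <;> (field_simp [hsdef]; try ring)
  have hEsmul : ∀ (c : ℝ), 0 ≤ c → ∀ y ∈ E, c • y ∈ E := by
    rintro c hc _ ⟨t, ht, x, hx, rfl⟩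
    exact ⟨c * t, mul_nonneg hc ht, x, hx, by rw [smul_smul]⟩
  set p : X → ℝ := fun y => sInf ((fun d => ε * ‖y + d‖ - f d) '' E) with hp
  have hbdd : ∀ y : X, ∀ v ∈ (fun d => ε * ‖y + d‖ - f d) '' E, -(ε * ‖y‖) ≤ v := by
    rintro y _ ⟨d, hd, rfl⟩
    have h1 : f d ≤ ε * ‖d‖ := hEf d hd
    have h2 : ‖d‖ ≤ ‖y + d‖ + ‖y‖ := by
      calc ‖d‖ = ‖y + d - y‖ := by rw [add_sub_cancel_left]
        _ ≤ ‖y + d‖ + ‖y‖ := norm_sub_le _ _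
    dsimp only
    nlinarith
  have hBdd : ∀ y : X, BddBelow ((fun d => ε * ‖y + d‖ - f d) '' E) :=
    fun y => ⟨-(ε * ‖y‖), fun v hv => hbdd y v hv⟩
  have hNe : ∀ y : X, ((fun d => ε * ‖y + d‖ - f d) '' E).Nonempty :=
    fun y => ⟨_, Set.mem_image_of_mem _ hE0⟩
  have hmemle : ∀ y, ∀ d ∈ E, p y ≤ ε * ‖y + d‖ - f d :=
    fun y d hd => csInf_le (hBdd y) (Set.mem_image_of_mem _ hd)
  have hple : ∀ y, p y ≤ ε * ‖y‖ := by
    intro y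
    have := hmemle y 0 hE0
    simpa using this
  have hpneg : ∀ d ∈ E, p (-d) ≤ -f d := by
    intro d hd
    have := hmemle (-d) d hd
    simpa using this
  have hN_add : ∀ y₁ y₂, p (y₁ + y₂) ≤ p y₁ + p y₂ := by
    intro y₁ y₂
    have key : ∀ d₁ ∈ E, ∀ d₂ ∈ E,
        p (y₁ + y₂) ≤ (ε * ‖y₁ + d₁‖ - f d₁) + (ε * ‖y₂ + d₂‖ - f d₂) := by
      intro d₁ hd₁ d₂ hd₂
      have h1 := hmemle (y₁ + y₂) (d₁ + d₂) (hEadd d₁ hd₁ d₂ hd₂)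
      have h2 : ‖y₁ + y₂ + (d₁ + d₂)‖ ≤ ‖y₁ + d₁‖ + ‖y₂ + d₂‖ := by
        rw [show y₁ + y₂ + (d₁ + d₂) = (y₁ + d₁) + (y₂ + d₂) by abel]
        exact norm_add_le _ _
      have h3 : f (d₁ + d₂) = f d₁ + f d₂ := map_add f _ _
      have h4 := mul_le_mul_of_nonneg_left h2 hε.le
      rw [mul_add] at h4
      linarith
    have h1 : ∀ a ∈ (fun d => ε * ‖y₁ + d‖ - f d) '' E, p (y₁ + y₂) - a ≤ p y₂ := by
      rintro _ ⟨d₁, hd₁, rfl⟩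
      refine le_csInf (hNe y₂) ?_
      rintro _ ⟨d₂, hd₂, rfl⟩
      have := key d₁ hd₁ d₂ hd₂
      dsimp only
      linarith
    have h2 : p (y₁ + y₂) - p y₂ ≤ p y₁ := by
      refine le_csInf (hNe y₁) ?_
      intro a ha
      have := h1 a ha
      linarith
    linarith
  have hle_smul : ∀ (c : ℝ), 0 < c → ∀ y, p (c • y) ≤ c * p y := by
    intro c hc y
    have key : ∀ a ∈ (fun d => ε * ‖y + d‖ - f d) '' E, p (c • y) ≤ c * a := by
      rintro _ ⟨d, hd, rfl⟩
      have h1 := hmemle (c • y) (c • d) (hEsmul c hc.le d hd)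
      have h2 : ‖c • y + c • d‖ = c * ‖y + d‖ := by
        rw [← smul_add, norm_smul, Real.norm_eq_abs, abs_of_nonneg hc.le]
      have h3 : f (c • d) = c * f d := by simp
      calc p (c • y) ≤ ε * ‖c • y + c • d‖ - f (c • d) := h1
        _ = c * (ε * ‖y + d‖ - f d) := by rw [h2, h3]; ring
    have h4 : p (c • y) / c ≤ p y := by
      refine le_csInf (hNe y) fun a ha => ?_
      rw [div_le_iff₀ hc]
      have := key a ha
      linarith
    calc p (c • y) = c * (p (c • y) / c) := by field_simp
      _ ≤ c * p y := mul_le_mul_of_nonneg_left h4 hc.le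
  have hN_hom : ∀ (c : ℝ), 0 < c → ∀ y, p (c • y) = c * p y := by
    intro c hc y
    refine le_antisymm (hle_smul c hc y) ?_
    have h1 := hle_smul c⁻¹ (inv_pos.2 hc) (c • y)
    rw [inv_smul_smul₀ (ne_of_gt hc)] at h1
    calc c * p y ≤ c * (c⁻¹ * p (c • y)) := mul_le_mul_of_nonneg_left h1 hc.le
      _ = p (c • y) := by field_simp
  have hp0 : 0 ≤ p 0 := by
    refine le_csInf (hNe 0) ?_
    rintro _ ⟨d, hd, rfl⟩
    have := hEf d hd
    simp only [zero_add]
    linarith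
  have hf0 : ∀ x : (⟨⊥, 0⟩ : X →ₗ.[ℝ] ℝ).domain, (⟨⊥, 0⟩ : X →ₗ.[ℝ] ℝ) x ≤ p x := by
    rintro ⟨x, hx⟩
    obtain rfl := (Submodule.mem_bot ℝ).1 hx
    simpa using hp0
  obtain ⟨g, -, hg⟩ := exists_extension_of_le_sublinear ⟨⊥, 0⟩ p hN_hom hN_add hf0
  have hgb : ∀ y, ‖g y‖ ≤ ε * ‖y‖ := by
    intro y
    rw [Real.norm_eq_abs, abs_le]
    constructor
    · have h1 := (hg (-y)).trans (hple (-y))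
      rw [map_neg, norm_neg] at h1
      linarith
    · exact (hg y).trans (hple y)
  refine ⟨g.mkContinuous ε hgb, LinearMap.mkContinuous_norm_le g hε.le hgb, ?_⟩
  intro x hx
  have hd : x - x₀ ∈ E := ⟨1, zero_le_one, x, hx, (one_smul _ _).symm⟩
  have h1 : g (-(x - x₀)) ≤ -f (x - x₀) := (hg _).trans (hpneg _ hd)
  rw [map_neg] at h1
  have h2 : f (x - x₀) ≤ g (x - x₀) := by linarith
  rw [map_sub, map_sub] at h2
  simp only [LinearMap.mkContinuous_apply]
  linarith
lemma bishop_phelps_min {X : Type*} [NormedAddCommGroup X] [NormedSpace ℝ X] [CompleteSpace X]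
    (C : Set X) (hne : C.Nonempty) (hbdd : Bornology.IsBounded C)
    (hcl : IsClosed C) (hconv : Convex ℝ C) (f : X →L[ℝ] ℝ) {ε : ℝ} (hε : 0 < ε) :
    ∃ h : X →L[ℝ] ℝ, ‖h - f‖ ≤ ε ∧ ∃ c₀ ∈ C, ∀ c ∈ C, h c₀ ≤ h c := by
  haveI : Nonempty C := hne.to_subtype
  haveI : CompleteSpace C := hcl.completeSpace_coe
  obtain ⟨R, hR⟩ := hbdd.subset_closedBall 0
  have hRb : ∀ x ∈ C, ‖x‖ ≤ R := by
    intro x hx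
    have := hR hx
    simpa [Metric.mem_closedBall, dist_zero_right] using this
  have hFc : Continuous (fun c : C => f (c : X)) := f.continuous.comp continuous_subtype_val
  have hFb : BddBelow (Set.range (fun c : C => f (c : X))) := by
    refine ⟨-(‖f‖ * R), ?_⟩
    rintro _ ⟨c, rfl⟩
    have h1 : |f (c : X)| ≤ ‖f‖ * ‖(c : X)‖ := by
      rw [← Real.norm_eq_abs]; exact f.le_opNorm _
    have h2 : ‖f‖ * ‖(c : X)‖ ≤ ‖f‖ * R :=
      mul_le_mul_of_nonneg_left (hRb _ c.2) (norm_nonneg f)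
    have := abs_le.1 h1
    simp only
    linarith
  obtain ⟨c₀, hc₀⟩ := weak_ekeland (fun c : C => f (c : X)) hFc hFb hε
  have hkey : ∀ x ∈ C, (-f) x ≤ (-f) (c₀ : X) + ε * ‖x - (c₀ : X)‖ := by
    intro x hx
    have := hc₀ ⟨x, hx⟩
    simp only [Subtype.dist_eq, dist_eq_norm] at this
    simp only [ContinuousLinearMap.neg_apply]
    linarith
  obtain ⟨G, hGn, hG⟩ := cone_perturb C hconv (-f) c₀.2 hε hkey
  refine ⟨f + G, ?_, c₀, c₀.2, ?_⟩
  · simpa using hGn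
  · intro c hc
    have := hG c hc
    simp only [ContinuousLinearMap.neg_apply, ContinuousLinearMap.add_apply] at *
    linarith

lemma exists_zero_of_sign_change {X : Type*} [NormedAddCommGroup X] [NormedSpace ℝ X]
    {C : Set X} (hconv : Convex ℝ C) (f : X →L[ℝ] ℝ) {c₁ c₂ : X} (h₁ : c₁ ∈ C) (h₂ : c₂ ∈ C)
    (hneg : f c₁ ≤ 0) (hpos : 0 ≤ f c₂) : ∃ c ∈ C, f c = 0 := by
  set γ : ℝ → ℝ := fun t => f ((1 - t) • c₁ + t • c₂) with hγ
  have hγc : Continuous γ := by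
    apply f.continuous.comp
    continuity
  have h0 : γ 0 = f c₁ := by simp [hγ]
  have h1 : γ 1 = f c₂ := by simp [hγ]
  have hmem : (0 : ℝ) ∈ Set.uIcc (γ 0) (γ 1) := by
    rw [h0, h1]
    exact Set.mem_uIcc.2 (Or.inl ⟨hneg, hpos⟩)
  obtain ⟨t, ht, hγt⟩ := intermediate_value_uIcc hγc.continuousOn hmem
  rw [Set.uIcc_of_le (zero_le_one' ℝ)] at ht
  exact ⟨(1 - t) • c₁ + t • c₂,
    hconv h₁ h₂ (by linarith [ht.2]) ht.1 (by ring), hγt⟩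

lemma pos_case {X : Type*} [NormedAddCommGroup X] [NormedSpace ℝ X] [CompleteSpace X]
    (C : Set X) (hne : C.Nonempty) (hbdd : Bornology.IsBounded C)
    (hcl : IsClosed C) (hconv : Convex ℝ C) (f : X →L[ℝ] ℝ)
    (hpos : ∀ c ∈ C, 0 < f c) {r : ℝ} (hr : 0 < r) :
    ∃ h : X →L[ℝ] ℝ, dist h f < r ∧ ∃ c₀ ∈ C, ∀ c ∈ C, |h c₀| ≤ |h c| := by
  obtain ⟨R₀, hR₀⟩ := hbdd.subset_closedBall 0
  set R := max R₀ 0 with hRdef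
  have hR0 : 0 ≤ R := le_max_right _ _
  have hRb : ∀ x ∈ C, ‖x‖ ≤ R := by
    intro x hx
    have := hR₀ hx
    rw [Metric.mem_closedBall, dist_zero_right] at this
    exact this.trans (le_max_left _ _)
  have hA : BddAbove (f '' C) := by
    refine ⟨‖f‖ * R, ?_⟩
    rintro _ ⟨c, hc, rfl⟩
    have h1 : |f c| ≤ ‖f‖ * ‖c‖ := by rw [← Real.norm_eq_abs]; exact f.le_opNorm _
    have h2 : ‖f‖ * ‖c‖ ≤ ‖f‖ * R := mul_le_mul_of_nonneg_left (hRb _ hc) (norm_nonneg f)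
    have := abs_le.1 h1
    linarith
  set M := sSup (f '' C) with hM
  obtain ⟨c', hc'⟩ := hne
  have hMpos : 0 < M := lt_of_lt_of_le (hpos c' hc') (le_csSup hA ⟨c', hc', rfl⟩)
  obtain ⟨_, ⟨c₁, hc₁C, rfl⟩, hc₁⟩ :=
    exists_lt_of_lt_csSup (⟨f c', c', hc', rfl⟩ : (f '' C).Nonempty) (half_lt_self hMpos)
  set ε' := min (r / 2) (M / (4 * (R + 1))) with hε'def
  have hε' : 0 < ε' := lt_min (by linarith) (by positivity)
  obtain ⟨h, hdist, c₀, hc₀C, hmin⟩ := bishop_phelps_min C ⟨c', hc'⟩ hbdd hcl hconv f hε'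
  have hdr : dist h f < r := by
    rw [dist_eq_norm]
    have := min_le_left (r / 2) (M / (4 * (R + 1)))
    linarith [hdist.trans this]
  by_cases hsign : 0 ≤ h c₀
  · refine ⟨h, hdr, c₀, hc₀C, fun c hc => ?_⟩
    rw [abs_of_nonneg hsign, abs_of_nonneg (hsign.trans (hmin c hc))]
    exact hmin c hc
  · push_neg at hsign
    have hc₁pos : 0 < h c₁ := by
      have h1 : |h c₁ - f c₁| ≤ ‖h - f‖ * ‖c₁‖ := by
        rw [← Real.norm_eq_abs]
        calc ‖h c₁ - f c₁‖ = ‖(h - f) c₁‖ := by simp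
          _ ≤ ‖h - f‖ * ‖c₁‖ := (h - f).le_opNorm _
      have h2 : ‖h - f‖ * ‖c₁‖ ≤ ε' * R :=
        mul_le_mul hdist (hRb _ hc₁C) (norm_nonneg _) hε'.le
      have h3 : ε' * R ≤ M / (4 * (R + 1)) * R :=
        mul_le_mul_of_nonneg_right (min_le_right _ _) hR0
      have h4 : M / (4 * (R + 1)) * R < M / 4 := by
        rw [div_mul_eq_mul_div, div_lt_div_iff₀ (by positivity) (by norm_num)]
        nlinarith
      have := abs_le.1 h1
      linarith
    obtain ⟨c₂, hc₂C, hc₂⟩ := exists_zero_of_sign_change hconv h hc₀C hc₁C hsign.le hc₁pos.le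
    refine ⟨h, hdr, c₂, hc₂C, fun c hc => ?_⟩
    rw [hc₂]
    simp [abs_nonneg]

theorem dense_min_attaining_functionals
    {X : Type*} [NormedAddCommGroup X] [NormedSpace ℝ X] [CompleteSpace X]
    (C : Set X) (hne : C.Nonempty) (hbdd : Bornology.IsBounded C)
    (hcl : IsClosed C) (hconv : Convex ℝ C) :
    Dense {f : X →L[ℝ] ℝ | ∃ c₀ ∈ C, ∀ c ∈ C, |f c₀| ≤ |f c|} := by
  rw [Metric.dense_iff]
  intro f r hr
  by_cases h0 : ∃ c ∈ C, f c = 0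
  · obtain ⟨c, hc, hfc⟩ := h0
    exact ⟨f, Metric.mem_ball_self hr, c, hc, fun c' _ => by simp [hfc]⟩
  · push_neg at h0
    have hsplit : (∀ c ∈ C, 0 < f c) ∨ (∀ c ∈ C, 0 < (-f) c) := by
      by_cases hp : ∀ c ∈ C, 0 < f c
      · exact Or.inl hp
      · push_neg at hp
        obtain ⟨c₂, hc₂C, hc₂⟩ := hp
        have hc₂' : f c₂ < 0 := lt_of_le_of_ne hc₂ (h0 c₂ hc₂C)
        refine Or.inr fun c hc => ?_
        simp only [ContinuousLinearMap.neg_apply, neg_pos]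
        by_contra hcon
        push_neg at hcon
        obtain ⟨c₃, hc₃C, hc₃⟩ := exists_zero_of_sign_change hconv f hc₂C hc hc₂'.le hcon
        exact h0 c₃ hc₃C hc₃
    rcases hsplit with hp | hp
    · obtain ⟨h, hdr, hmem⟩ := pos_case C hne hbdd hcl hconv f hp hr
      exact ⟨h, Metric.mem_ball.2 hdr, hmem⟩
    · obtain ⟨h, hdr, c₀, hc₀, hmem⟩ := pos_case C hne hbdd hcl hconv (-f) hp hr
      refine ⟨-h, Metric.mem_ball.2 ?_, c₀, hc₀, fun c hc => ?_⟩
      · rw [dist_eq_norm] at hdr ⊢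
        rw [show -h - f = -(h - -f) by abel, norm_neg]
        exact hdr
      · simpa [abs_neg] using hmem c hc
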